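/- arXiv:1705.04595 — 3 statements merged into one kernel-verified Lean document; each statement's English description precedes it below -/
import Mathlib

section
/- Let N be even, l ≥ 1 an integer, λ ∈ ℤ^N, n ∈ ℤ, and Δ = 4n − (λ₁² + ⋯ + λ_N²). If λ has at least one even coordinate and at least one odd coordinate, then 𝔇_{2^l}(λ, −Δ) = 2^{l(N−1)}, i.e. 2^{l(1−N)} 𝔇_{2^l}(λ,−Δ) = 1. -/
def Spair (l : ℕ) (a b c : ℤ) : Finset (ℕ × ℕ) :=
  (Finset.range (2^l) ×ˢ Finset.range (2^l)).filter
    (fun p => (2^l : ℤ) ∣ ((p.1:ℤ)^2 - a*p.1 + (p.2:ℤ)^2 - b*p.2 - c))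

lemma Spair_step (l : ℕ) (hl : 1 ≤ l) (a b c : ℤ) (ha : Even a) (hb : Odd b) :
    (Spair (l+1) a b c).card = 2 * (Spair l a b c).card := by
  classical
  obtain ⟨a', rfl⟩ := ha
  obtain ⟨b', rfl⟩ := hb
  set Q : ℕ → ℕ → ℤ := fun u v => (u:ℤ)^2 - (a'+a')*u + (v:ℤ)^2 - (2*b'+1)*v - c with hQ
  have memS : ∀ (L : ℕ) (p : ℕ × ℕ), p ∈ Spair L (a'+a') (2*b'+1) c ↔
      p.1 < 2^L ∧ p.2 < 2^L ∧ ((2:ℤ)^L) ∣ Q p.1 p.2 := by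
    intro L p
    simp [Spair, Finset.mem_filter, Finset.mem_product, Finset.mem_range, hQ, and_assoc]
  set K : ℕ := 2^l with hKdef
  have hK0 : 0 < K := Nat.pow_pos (by norm_num)
  have hKZ : (2:ℤ)^l = (K:ℤ) := by rw [hKdef]; push_cast; ring
  have hpow : (2:ℕ)^(l+1) = 2*K := by rw [hKdef, pow_succ]; ring
  have hpowZ : (2:ℤ)^(l+1) = 2*(K:ℤ) := by rw [pow_succ, hKZ]; ring
  obtain ⟨K', hK'⟩ : (2:ℤ) ∣ (K:ℤ) := by
    rw [← hKZ]; exact dvd_pow_self 2 (Nat.one_le_iff_ne_zero.mp hl)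
  have key : ∀ u v ε δ : ℕ, Q (u + ε*K) (v + δ*K)
      = Q u v + (K:ℤ) * (2*u*ε + ε^2*K - (a'+a')*ε + 2*v*δ + δ^2*K - (2*b'+1)*δ) := by
    intro u v ε δ; simp only [hQ]; push_cast; ring
  have crux : ∀ (u0 v0 ε δ : ℕ), ε ≤ 1 → δ ≤ 1 → ∀ m : ℤ, Q u0 v0 = (K:ℤ)*m →
      ((2*(K:ℤ)) ∣ Q (u0+ε*K) (v0+δ*K) ↔ (2:ℤ) ∣ m + δ) := by
    intro u0 v0 ε δ hε hδ m hm
    rw [key, hm, ← mul_add, show (2*(K:ℤ)) = (K:ℤ)*2 by ring,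
      mul_dvd_mul_iff_left (by positivity : (K:ℤ) ≠ 0)]
    interval_cases ε <;> interval_cases δ <;> push_cast <;> omega
  have getm : ∀ u v : ℕ, (2*(K:ℤ)) ∣ Q u v → ∃ m : ℤ, Q (u % K) (v % K) = (K:ℤ)*m := by
    intro u v hd
    have hu' : u % K + (u / K) * K = u := by rw [mul_comm]; exact Nat.mod_add_div u K
    have hv' : v % K + (v / K) * K = v := by rw [mul_comm]; exact Nat.mod_add_div v K
    have h1 : (K:ℤ) ∣ Q u v := dvd_trans ⟨2, by ring⟩ hd
    have e := key (u % K) (v % K) (u / K) (v / K)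
    rw [hu', hv'] at e
    rw [e] at h1
    exact (dvd_add_right (dvd_mul_right _ _)).mp (by rwa [add_comm] at h1)
  have htarget : ((Spair l (a'+a') (2*b'+1) c) ×ˢ ({0,1} : Finset ℕ)).card
      = 2 * (Spair l (a'+a') (2*b'+1) c).card := by
    rw [Finset.card_product]; norm_num [mul_comm]
  rw [← htarget]
  refine Finset.card_bij (fun p _ => ((p.1 % K, p.2 % K), p.1 / K)) ?_ ?_ ?_
  · -- maps to target
    rintro ⟨u, v⟩ hp
    rw [memS] at hp
    obtain ⟨hu, hv, hd⟩ := hp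
    rw [hpow] at hu hv
    rw [hpowZ] at hd
    obtain ⟨m, hm⟩ := getm u v hd
    have hdiv2 : u / K < 2 := Nat.div_lt_iff_lt_mul hK0 |>.mpr (by omega)
    refine Finset.mem_product.mpr ⟨?_, ?_⟩
    · rw [memS]
      refine ⟨?_, ?_, ?_⟩
      · simpa [← hKdef] using Nat.mod_lt u hK0
      · simpa [← hKdef] using Nat.mod_lt v hK0
      · rw [hKZ]; exact ⟨m, hm⟩
    · simp only [Finset.mem_insert, Finset.mem_singleton]
      generalize u / K = w at hdiv2 ⊢
      omega
  · -- injective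
    rintro ⟨u, v⟩ hp ⟨u2, v2⟩ hp2 heq
    simp only [Prod.mk.injEq] at heq
    obtain ⟨⟨h1, h2⟩, h3⟩ := heq
    have hueq : u = u2 := by
      rw [← Nat.mod_add_div u K, ← Nat.mod_add_div u2 K, h1, h3]
    subst hueq
    rw [memS] at hp hp2
    obtain ⟨hult, hvlt, hd⟩ := hp
    obtain ⟨-, hvlt2, hd2⟩ := hp2
    rw [hpow] at hult hvlt hvlt2
    rw [hpowZ] at hd hd2
    obtain ⟨m, hm⟩ := getm u v hd
    rw [h2] at hm
    have hδ : v / K ≤ 1 := by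
      have : v / K < 2 := Nat.div_lt_iff_lt_mul hK0 |>.mpr (by omega)
      omega
    have hδ2 : v2 / K ≤ 1 := by
      have : v2 / K < 2 := Nat.div_lt_iff_lt_mul hK0 |>.mpr (by omega)
      omega
    have hε : u / K ≤ 1 := by
      have : u / K < 2 := Nat.div_lt_iff_lt_mul hK0 |>.mpr (by omega)
      omega
    have hu' : u % K + (u / K) * K = u := by rw [mul_comm]; exact Nat.mod_add_div u K
    have hv' : v % K + (v / K) * K = v := by rw [mul_comm]; exact Nat.mod_add_div v K
    have hv2' : v2 % K + (v2 / K) * K = v2 := by rw [mul_comm]; exact Nat.mod_add_div v2 K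
    have hvv : v2 % K + (v / K) * K = v := by rw [← h2]; exact hv'
    have d1 : (2:ℤ) ∣ m + ↑(v/K) := by
      refine (crux (u % K) (v2 % K) (u / K) (v / K) hε hδ m hm).mp ?_
      rw [hu', hvv]; exact hd
    have d2 : (2:ℤ) ∣ m + ↑(v2/K) := by
      refine (crux (u % K) (v2 % K) (u / K) (v2 / K) hε hδ2 m hm).mp ?_
      rw [hu', hv2']; exact hd2
    have hvd : v / K = v2 / K := by
      generalize v / K = w1 at hδ d1
      generalize v2 / K = w2 at hδ2 d2
      omega
    have : v = v2 := by rw [← hvv, hvd]; exact hv2'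
    simp [this]
  · -- surjective
    rintro ⟨⟨u0, v0⟩, ε⟩ hmem
    rw [Finset.mem_product, memS] at hmem
    obtain ⟨⟨hu0, hv0, hd⟩, hε⟩ := hmem
    dsimp only at hu0 hv0 hd
    simp only [Finset.mem_insert, Finset.mem_singleton] at hε
    rw [← hKdef] at hu0 hv0
    rw [hKZ] at hd
    obtain ⟨m, hm⟩ := hd
    have hεle : ε ≤ 1 := by omega
    set δ : ℕ := if (2:ℤ) ∣ m then 0 else 1 with hδdef
    have hδle : δ ≤ 1 := by rw [hδdef]; split <;> norm_num
    have hpar : (2:ℤ) ∣ m + δ := by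
      by_cases h : (2:ℤ) ∣ m
      · simp only [hδdef, if_pos h]; push_cast; omega
      · simp only [hδdef, if_neg h]; push_cast; omega
    have hmem2 : (u0 + ε*K, v0 + δ*K) ∈ Spair (l+1) (a'+a') (2*b'+1) c := by
      rw [memS, hpow, hpowZ]
      refine ⟨?_, ?_, (crux u0 v0 ε δ hεle hδle m hm).mpr hpar⟩
      · interval_cases ε <;> omega
      · interval_cases δ <;> omega
    refine ⟨(u0 + ε*K, v0 + δ*K), hmem2, ?_⟩
    · have h1 : (u0 + ε*K) % K = u0 := by
        rw [Nat.add_mul_mod_self_right]; exact Nat.mod_eq_of_lt hu0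
      have h2 : (v0 + δ*K) % K = v0 := by
        rw [Nat.add_mul_mod_self_right]; exact Nat.mod_eq_of_lt hv0
      have h3 : (u0 + ε*K) / K = ε := by
        rw [Nat.add_mul_div_right _ _ hK0, Nat.div_eq_of_lt hu0]; omega
      simp [h1, h2, h3]
lemma Spair_base (a b c : ℤ) (ha : Even a) (hb : Odd b) : (Spair 1 a b c).card = 2 := by
  obtain ⟨a', rfl⟩ := ha
  obtain ⟨b', rfl⟩ := hb
  rcases Int.even_or_odd c with ⟨c', rfl⟩ | ⟨c', rfl⟩
  · have h : Spair 1 (a'+a') (2*b'+1) (c'+c') = {(0,0),(0,1)} := by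
      ext ⟨u, v⟩
      simp only [Spair, Finset.mem_filter, Finset.mem_product, Finset.mem_range,
        Finset.mem_insert, Finset.mem_singleton, Prod.mk.injEq]
      constructor
      · rintro ⟨⟨hu, hv⟩, hd⟩
        interval_cases u <;> interval_cases v <;> simp_all <;> omega
      · rintro (⟨rfl, rfl⟩ | ⟨rfl, rfl⟩) <;> refine ⟨⟨by norm_num, by norm_num⟩, ?_⟩ <;>
          push_cast <;> [exact ⟨-c', by ring⟩; exact ⟨-b'-c', by ring⟩]
    rw [h]; decide
  · have h : Spair 1 (a'+a') (2*b'+1) (2*c'+1) = {(1,0),(1,1)} := by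
      ext ⟨u, v⟩
      simp only [Spair, Finset.mem_filter, Finset.mem_product, Finset.mem_range,
        Finset.mem_insert, Finset.mem_singleton, Prod.mk.injEq]
      constructor
      · rintro ⟨⟨hu, hv⟩, hd⟩
        interval_cases u <;> interval_cases v <;> simp_all <;> omega
      · rintro (⟨rfl, rfl⟩ | ⟨rfl, rfl⟩) <;> refine ⟨⟨by norm_num, by norm_num⟩, ?_⟩ <;>
          push_cast <;> [exact ⟨-a'-c', by ring⟩; exact ⟨-a'-b'-c', by ring⟩]
    rw [h]; decide

lemma Spair_card (l : ℕ) (hl : 1 ≤ l) (a b c : ℤ) (ha : Even a) (hb : Odd b) :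
    (Spair l a b c).card = 2^l := by
  induction l with
  | zero => omega
  | succ k ih =>
    rcases Nat.eq_zero_or_pos k with h | h
    · subst h
      exact Spair_base a b c ha hb
    · have hk : 1 ≤ k := h
      rw [Spair_step k hk a b c ha hb, ih hk, pow_succ]
      ring

lemma pair_card (l : ℕ) (hl : 1 ≤ l) (a b c : ℤ) (ha : Even a) (hb : Odd b) :
    Nat.card {p : ZMod (2^l) × ZMod (2^l) //
      (p.1^2 - (a:ZMod (2^l))*p.1 + p.2^2 - (b:ZMod (2^l))*p.2 : ZMod (2^l)) = (c : ZMod (2^l))}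
      = 2^l := by
  classical
  haveI : NeZero ((2:ℕ)^l) := ⟨pow_ne_zero _ (by norm_num)⟩
  rw [Nat.card_eq_fintype_card, Fintype.card_subtype]
  refine Eq.trans (Finset.card_bij (fun p _ => (p.1.val, p.2.val)) ?_ ?_ ?_)
    (Spair_card l hl a b c ha hb)
  · rintro ⟨u, v⟩ hp
    simp only [Finset.mem_filter, Finset.mem_univ, true_and] at hp
    simp only [Spair, Finset.mem_filter, Finset.mem_product, Finset.mem_range]
    refine ⟨⟨ZMod.val_lt u, ZMod.val_lt v⟩, ?_⟩
    have : (((u.val:ℤ)^2 - a*u.val + (v.val:ℤ)^2 - b*v.val - c : ℤ) : ZMod (2^l)) = 0 := by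
      push_cast
      simp only [ZMod.natCast_val, ZMod.intCast_cast, ZMod.cast_id', id_eq]
      rw [hp]; ring
    have h2 := (ZMod.intCast_zmod_eq_zero_iff_dvd _ (2^l)).mp this
    exact_mod_cast h2
  · rintro ⟨u, v⟩ h1x ⟨u2, v2⟩ h2x hpq
    simp only [Prod.mk.injEq] at hpq
    have h1 : u = u2 := ZMod.val_injective _ hpq.1
    have h2 : v = v2 := ZMod.val_injective _ hpq.2
    simp [h1, h2]
  · rintro ⟨u, v⟩ hmem
    simp only [Spair, Finset.mem_filter, Finset.mem_product, Finset.mem_range] at hmem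
    obtain ⟨⟨hu, hv⟩, hd⟩ := hmem
    refine ⟨((u : ZMod (2^l)), (v : ZMod (2^l))), ?_, ?_⟩
    · simp only [Finset.mem_filter, Finset.mem_univ, true_and]
      have : (((u:ℤ)^2 - a*u + (v:ℤ)^2 - b*v - c : ℤ) : ZMod (2^l)) = 0 :=
        (ZMod.intCast_zmod_eq_zero_iff_dvd _ (2^l)).mpr (by exact_mod_cast hd)
      push_cast at this
      linear_combination this
    · simp only [Prod.mk.injEq]
      constructor <;> [exact ZMod.val_cast_of_lt hu; exact ZMod.val_cast_of_lt hv]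

def splitEquiv {N : ℕ} (M : Type*) (j k : Fin N) (hjk : j ≠ k) :
    (Fin N → M) ≃ (M × M) × ({i : Fin N // i ≠ j ∧ i ≠ k} → M) where
  toFun x := ((x j, x k), fun i => x i.1)
  invFun z i := if h1 : i = j then z.1.1 else if h2 : i = k then z.1.2 else z.2 ⟨i, h1, h2⟩
  left_inv x := by
    funext i
    by_cases h1 : i = j
    · subst h1; simp
    · by_cases h2 : i = k
      · subst h2; simp [h1]
      · simp [h1, h2]
  right_inv z := by
    obtain ⟨⟨u, v⟩, y⟩ := z
    refine Prod.ext (Prod.ext ?_ ?_) ?_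
    · simp
    · simp [Ne.symm hjk]
    · funext i
      simp [i.2.1, i.2.2]

def prodSigmaSubtype {A B : Type*} (P : A → B → Prop) :
    {z : A × B // P z.1 z.2} ≃ Σ b : B, {a : A // P a b} where
  toFun z := ⟨z.1.2, ⟨z.1.1, z.2⟩⟩
  invFun s := ⟨(s.2.1, s.1), s.2.2⟩
  left_inv z := rfl
  right_inv s := rfl

/-- For the lattice `N A₁` (Gram matrix `2 • 1`), the representation number
`𝔇_a(λ, t) = #{x ∈ (ℤ/aℤ)^N : ∑ᵢ (2xᵢ - λᵢ)² ≡ t (mod 4a)}`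
(well defined since the sum modulo `4a` does not depend on the choice of lifts). -/
noncomputable def Dcount (N : ℕ) (a : ℕ) (lam : Fin N → ℤ) (t : ℤ) : ℕ :=
  Nat.card {x : Fin N → ZMod a //
    (4 * a : ℤ) ∣ (∑ i, (2 * ((x i).val : ℤ) - lam i) ^ 2) - t}

/-- if `N` is even, `l ≥ 1`, `λ ∈ ℤ^N` has at least one even and at least one
odd coordinate, `n ∈ ℤ` and `Δ = 4n - ∑ λᵢ²`, then `𝔇_{2^l}(λ, -Δ) = 2^{l(N-1)}`. -/
theorem Dcount_two_pow_of_mixed_parity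
    (N : ℕ) (hN : Even N) (l : ℕ) (hl : 1 ≤ l)
    (lam : Fin N → ℤ) (n : ℤ) (Δ : ℤ) (hΔ : Δ = 4 * n - ∑ i, (lam i) ^ 2)
    (heven : ∃ i, Even (lam i)) (hodd : ∃ i, Odd (lam i)) :
    Dcount N (2 ^ l) lam (-Δ) = 2 ^ (l * (N - 1)) := by
  classical
  haveI : NeZero ((2:ℕ)^l) := ⟨pow_ne_zero _ (by norm_num)⟩
  obtain ⟨j, hj⟩ := heven
  obtain ⟨k, hk⟩ := hodd
  have hjk : j ≠ k := by rintro rfl; exact (Int.not_odd_iff_even.mpr hj) hk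
  have hN2 : 2 ≤ N := by
    have h := Fintype.one_lt_card_iff_nontrivial (α := Fin N) |>.mpr ⟨⟨j, k, hjk⟩⟩
    simp at h; omega
  set M := ZMod (2^l) with hM
  set C : M := ((-n : ℤ) : M) with hC
  -- Step A: rewrite the divisibility condition in terms of ZMod
  have stepA : Dcount N (2^l) lam (-Δ) =
      Nat.card {x : Fin N → M // ∑ i, ((x i)^2 - (lam i : M) * x i) = C} := by
    unfold Dcount
    apply Nat.card_congr
    apply Equiv.subtypeEquivRight
    intro x
    have hsum : (∑ i, (2 * ((x i).val : ℤ) - lam i) ^ 2) - (-Δ)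
        = 4 * ((∑ i, (((x i).val : ℤ)^2 - lam i * (x i).val)) + n) := by
      have hterm : ∀ i ∈ Finset.univ, (2 * ((x i).val : ℤ) - lam i) ^ 2
          = 4 * (((x i).val : ℤ)^2 - lam i * (x i).val) + (lam i)^2 := fun i _ => by ring
      rw [Finset.sum_congr rfl hterm, Finset.sum_add_distrib, ← Finset.mul_sum, hΔ]
      ring
    rw [hsum]
    rw [mul_dvd_mul_iff_left (by norm_num : (4:ℤ) ≠ 0)]
    rw [← ZMod.intCast_zmod_eq_zero_iff_dvd]
    push_cast
    simp only [ZMod.natCast_val, ZMod.intCast_cast, ZMod.cast_id', id_eq, ZMod.cast_id]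
    rw [hC]
    push_cast
    constructor
    · intro h; linear_combination h
    · intro h; linear_combination h
  rw [stepA]
  -- Step B: counting
  set φ : M × M → M := fun p => p.1^2 - (lam j : M) * p.1 + (p.2^2 - (lam k : M) * p.2) with hφ
  set ψ : ({i : Fin N // i ≠ j ∧ i ≠ k} → M) → M := fun y => ∑ i, ((y i)^2 - (lam i.1 : M) * (y i)) with hψ
  have hpair : ∀ d : M, Nat.card {p : M × M // φ p = d} = 2^l := by
    intro d
    have h1 := pair_card l hl (lam j) (lam k) (d.val : ℤ) hj hk
    have hd : ((((d.val : ℕ) : ℤ)) : ZMod (2^l)) = d := by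
      push_cast
      simp [ZMod.natCast_val, ZMod.cast_id]
    rw [hd] at h1
    rw [← h1]
    apply Nat.card_congr
    apply Equiv.subtypeEquivRight
    intro p
    constructor <;> intro h <;> linear_combination h
  have hsum2 : ∀ x : Fin N → M, ∑ i, ((x i)^2 - (lam i : M) * x i)
      = φ (x j, x k) + ψ (fun i => x i.1) := by
    intro x
    rw [← Finset.sum_filter_add_sum_filter_not Finset.univ (fun i => i = j ∨ i = k)]
    congr 1
    · have hfil : Finset.univ.filter (fun i => i = j ∨ i = k) = {j, k} := by
        ext i; simp
      rw [hfil, Finset.sum_pair hjk, hφ]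
    · rw [hψ]
      exact Finset.sum_subtype _ (fun i => by simp [not_or]) _
  have e1 : {x : Fin N → M // ∑ i, ((x i)^2 - (lam i : M) * x i) = C}
      ≃ Σ y : ({i : Fin N // i ≠ j ∧ i ≠ k} → M), {p : M × M // φ p + ψ y = C} :=
    (Equiv.subtypeEquiv (splitEquiv M j k hjk) (fun x => by rw [hsum2 x]; exact Iff.rfl)).trans
      (prodSigmaSubtype (fun (p : M × M) y => φ p + ψ y = C))
  rw [Nat.card_congr e1, Nat.card_eq_fintype_card, Fintype.card_sigma]
  have hfib : ∀ y : ({i : Fin N // i ≠ j ∧ i ≠ k} → M), Fintype.card {p : M × M // φ p + ψ y = C} = 2^l := by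
    intro y
    rw [← Nat.card_eq_fintype_card]
    refine Eq.trans (Nat.card_congr (Equiv.subtypeEquivRight fun p => ?_)) (hpair (C - ψ y))
    exact eq_sub_iff_add_eq.symm
  rw [Finset.sum_congr rfl (fun y _ => hfib y), Finset.sum_const, Finset.card_univ,
    smul_eq_mul]
  have hcardY : Fintype.card ({i : Fin N // i ≠ j ∧ i ≠ k} → M) = (2^l)^(N-2) := by
    rw [Fintype.card_fun, ZMod.card]
    congr 1
    rw [Fintype.card_subtype]
    have hfil2 : Finset.univ.filter (fun i : Fin N => i ≠ j ∧ i ≠ k)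
        = Finset.univ \ {j, k} := by ext i; simp [not_or]
    rw [hfil2, Finset.card_sdiff_of_subset (Finset.subset_univ _), Finset.card_univ, Fintype.card_fin,
      Finset.card_pair hjk]
  rw [hcardY]
  have hNe : N - 1 = (N - 2) + 1 := by clear * - hN2; omega
  have hfin : ((2:ℕ)^l)^(N-2) * 2^l = 2^(l*(N-1)) := by
    rw [← pow_mul, ← pow_add, hNe, Nat.mul_succ]
  exact hfin
end

section
/- Let p be an odd prime, l ≥ 1 an integer, λ ∈ ℤ^N, n ∈ ℤ, and Δ = 4n − (λ₁² + ⋯ + λ_N²). Define α(λ) = #{σ ∈ {0,1}^N : ∑_{i : λ_i odd} σ_i ≡ ∑_{i : λ_i even} σ_i (mod 4)} and ω(λ) = #{σ ∈ {0,1}^N : σ₁ + ⋯ + σ_N ≡ −Δ (mod 4)} (equivalently ω(λ) = ∑_{0 ≤ j ≤ N, j ≡ −Δ (mod 4)} C(N,j)). Then α(λ) · 𝔇_{p^l}(λ, −Δ) = ω(λ) · A_N(−Δ, p^l). -/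
/-- `A_N(t, a)` is the number of `x ∈ (ℤ/aℤ)^N` with `x₁² + ⋯ + x_N² ≡ t (mod a)`. -/
noncomputable def Acount (N : ℕ) (a : ℕ) (t : ℤ) : ℕ :=
  Nat.card {x : Fin N → ZMod a // ∑ i, (x i) ^ 2 = (t : ZMod a)}

/-- `α(λ) = #{σ ∈ {0,1}^N : ∑_{i : λᵢ odd} σᵢ ≡ ∑_{i : λᵢ even} σᵢ (mod 4)}`. -/
noncomputable def alphaCount (N : ℕ) (lam : Fin N → ℤ) : ℕ :=
  Nat.card {σ : Fin N → Bool //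
    (Finset.univ.filter fun i => Odd (lam i) ∧ σ i = true).card
      ≡ (Finset.univ.filter fun i => Even (lam i) ∧ σ i = true).card [MOD 4]}

/-- `ω(λ) = #{σ ∈ {0,1}^N : σ₁ + ⋯ + σ_N ≡ -Δ (mod 4)}`. -/
noncomputable def omegaCount (N : ℕ) (t : ℤ) : ℕ :=
  Nat.card {σ : Fin N → Bool //
    ((Finset.univ.filter fun i => σ i = true).card : ℤ) ≡ t [ZMOD 4]}

open Finset

lemma aux_D_eq_A (N : ℕ) (a : ℕ) (ha : Odd a) (ha0 : a ≠ 0)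
    (lam : Fin N → ℤ) (n Δ : ℤ) (hΔ : Δ = 4 * n - ∑ i, (lam i) ^ 2) :
    Dcount N a lam (-Δ) = Acount N a (-Δ) := by
  haveI : NeZero a := ⟨ha0⟩
  have h2 : IsUnit (2 : ZMod a) := by
    have := (ZMod.isUnit_iff_coprime 2 a).mpr ha.coprime_two_right.symm
    simpa using this
  have h2' : (2 : ZMod a)⁻¹ * 2 = 1 := ZMod.inv_mul_of_unit _ h2
  have h2'' : (2 : ZMod a) * (2 : ZMod a)⁻¹ = 1 := ZMod.mul_inv_of_unit _ h2
  have h4u : IsUnit (4 : ZMod a) := by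
    have h42 : (4 : ZMod a) = 2 * 2 := by norm_num
    rw [h42]; exact h2.mul h2
  let e : (Fin N → ZMod a) ≃ (Fin N → ZMod a) :=
    { toFun := fun x i => 2 * x i - (lam i : ZMod a)
      invFun := fun y i => (2 : ZMod a)⁻¹ * (y i + (lam i : ZMod a))
      left_inv := by
        intro x; funext i
        simp only [sub_add_cancel, ← mul_assoc, h2', one_mul]
      right_inv := by
        intro y; funext i
        simp only [← mul_assoc, h2'', one_mul, add_sub_cancel_right] }
  refine Nat.card_congr (Equiv.subtypeEquiv e fun x => ?_)
  simp only [e, Equiv.coe_fn_mk]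
  set M : ℤ := (∑ i, ((x i).val : ℤ) * (((x i).val : ℤ) - lam i)) + n with hM
  have hSum : (∑ i, (2 * ((x i).val : ℤ) - lam i) ^ 2) - (-Δ) = 4 * M := by
    have hexp : (∑ i, (2 * ((x i).val : ℤ) - lam i) ^ 2)
        = ∑ i, (4 * (((x i).val : ℤ) * (((x i).val : ℤ) - lam i)) + (lam i) ^ 2) :=
      Finset.sum_congr rfl (fun i _ => by ring)
    rw [hM, hΔ, hexp, Finset.sum_add_distrib, ← Finset.mul_sum]
    ring
  have h1 : (∑ i, (2 * x i - (lam i : ZMod a)) ^ 2 : ZMod a)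
      = ((∑ i, (2 * ((x i).val : ℤ) - lam i) ^ 2 : ℤ) : ZMod a) := by
    push_cast
    exact Finset.sum_congr rfl fun i _ => by rw [ZMod.natCast_val, ZMod.cast_id]
  have hZ : (∑ i, (2 * x i - (lam i : ZMod a)) ^ 2 : ZMod a)
      = ((4 * M : ℤ) : ZMod a) + ((-Δ : ℤ) : ZMod a) := by
    rw [h1, ← hSum]; push_cast; ring
  have hiff1 : (4 * (a : ℤ)) ∣ (∑ i, (2 * ((x i).val : ℤ) - lam i) ^ 2) - (-Δ)
      ↔ (a : ℤ) ∣ M := by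
    rw [hSum]
    exact mul_dvd_mul_iff_left (by norm_num : (4 : ℤ) ≠ 0)
  have hiff2 : (∑ i, (2 * x i - (lam i : ZMod a)) ^ 2 : ZMod a) = ((-Δ : ℤ) : ZMod a)
      ↔ (a : ℤ) ∣ M := by
    rw [hZ, add_eq_right]
    constructor
    · intro h
      have hM0 : ((M : ℤ) : ZMod a) = 0 := by
        refine h4u.mul_left_cancel ?_
        rw [mul_zero]
        push_cast at h
        convert h using 1
      exact (ZMod.intCast_zmod_eq_zero_iff_dvd M a).mp hM0
    · intro h
      obtain ⟨c, hc⟩ := h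
      rw [hc]
      push_cast
      simp
  exact hiff1.trans hiff2.symm

lemma aux_alpha_eq_omega (N : ℕ) (lam : Fin N → ℤ) (n Δ : ℤ)
    (hΔ : Δ = 4 * n - ∑ i, (lam i) ^ 2) :
    alphaCount N lam = omegaCount N (-Δ) := by
  classical
  set k := (univ.filter fun i => Odd (lam i)).card with hk
  have h4 : (4 : ZMod 4) = 0 := by decide
  have hDelta : ((-Δ : ℤ) : ZMod 4) = (k : ZMod 4) := by
    have hsum : (∑ i, ((lam i : ZMod 4)) ^ 2) = (k : ZMod 4) := by
      have h1 : ∀ i ∈ Finset.univ (α := Fin N),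
          ((lam i : ZMod 4)) ^ 2 = if Odd (lam i) then 1 else 0 := by
        intro i _
        rcases Int.even_or_odd (lam i) with he | ho
        · rw [if_neg (Int.not_odd_iff_even.mpr he)]
          obtain ⟨m, hm⟩ := he
          rw [hm]
          push_cast
          calc ((m : ZMod 4) + m) ^ 2 = 4 * m ^ 2 := by ring
            _ = 0 := by rw [h4]; ring
        · rw [if_pos ho]
          obtain ⟨m, hm⟩ := ho
          rw [hm]
          push_cast
          calc ((2 : ZMod 4) * m + 1) ^ 2 = 4 * (m ^ 2 + m) + 1 := by ring
            _ = 1 := by rw [h4]; ring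
      rw [Finset.sum_congr rfl h1, Finset.sum_boole]
    rw [hΔ]
    push_cast
    rw [h4]
    rw [← hsum]
    ring
  set flip : (Fin N → Bool) → (Fin N → Bool) :=
    fun σ i => if Odd (lam i) then !(σ i) else σ i with hflipdef
  have hinv : Function.Involutive flip := by
    intro σ; funext i
    by_cases h : Odd (lam i) <;> simp [hflipdef, h]
  refine Nat.card_congr (Equiv.subtypeEquiv hinv.toPerm fun σ => ?_)
  simp only [Function.Involutive.coe_toPerm]
  set a := (univ.filter fun i => Odd (lam i) ∧ σ i = true).card with hA
  set a' := (univ.filter fun i => Odd (lam i) ∧ σ i = false).card with hA'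
  set b := (univ.filter fun i => Even (lam i) ∧ σ i = true).card with hB
  have hsplit : k = a + a' := by
    rw [hk, hA, hA', ← Finset.filter_filter, ← Finset.filter_filter]
    rw [← Finset.card_filter_add_card_filter_not
      (s := univ.filter fun i => Odd (lam i)) (p := fun i => σ i = true)]
    congr 1
    refine congrArg Finset.card (Finset.filter_congr fun i _ => ?_)
    simp
  have hflip : (univ.filter fun i => flip σ i = true).card = a' + b := by
    rw [hA', hB]
    rw [← Finset.card_filter_add_card_filter_not
      (s := univ.filter fun i => flip σ i = true) (p := fun i => Odd (lam i)),
      Finset.filter_filter, Finset.filter_filter]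
    congr 1
    · refine congrArg Finset.card (Finset.filter_congr fun i _ => ?_)
      by_cases h : Odd (lam i) <;> simp [hflipdef, h]
    · refine congrArg Finset.card (Finset.filter_congr fun i _ => ?_)
      by_cases h : Odd (lam i)
      · simp [hflipdef, h]
      · simp [hflipdef, h, Int.not_odd_iff_even.mp h]
  erw [hflip]
  have hk4 : (k : ZMod 4) = (a : ZMod 4) + (a' : ZMod 4) := by
    rw [hsplit]; push_cast; ring
  rw [← ZMod.natCast_eq_natCast_iff]
  refine Iff.trans ?_ (ZMod.intCast_eq_intCast_iff ((a' + b : ℕ) : ℤ) (-Δ) 4)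
  rw [hDelta]
  push_cast
  rw [hk4]
  constructor
  · intro h; linear_combination -h
  · intro h; linear_combination -h


/-- for an odd prime `p`, `l ≥ 1`, `λ ∈ ℤ^N`, `n ∈ ℤ` and
`Δ = 4n - ∑ λᵢ²`, one has `α(λ) · 𝔇_{p^l}(λ, -Δ) = ω(λ) · A_N(-Δ, p^l)`. -/
theorem alpha_mul_Dcount_eq_omega_mul_Acount
    (N : ℕ) (p : ℕ) (hp : p.Prime) (hp2 : p ≠ 2) (l : ℕ) (hl : 1 ≤ l)
    (lam : Fin N → ℤ) (n : ℤ) (Δ : ℤ) (hΔ : Δ = 4 * n - ∑ i, (lam i) ^ 2) :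
    alphaCount N lam * Dcount N (p ^ l) lam (-Δ)
      = omegaCount N (-Δ) * Acount N (p ^ l) (-Δ) := by
  have ha : Odd (p ^ l) := (hp.odd_of_ne_two hp2).pow
  have ha0 : p ^ l ≠ 0 := pow_ne_zero l hp.pos.ne'
  rw [aux_D_eq_A N (p ^ l) ha ha0 lam n Δ hΔ, aux_alpha_eq_omega N lam n Δ hΔ]
end

section
/- Let N ≥ 0 and let A be a subset of {1, …, N} with |A| = j. Then the number of subsets T ⊆ {1, …, N} with |T ∩ A^c| ≡ |T ∩ A| (mod 4) equals the number of subsets T ⊆ {1, …, N} with |T| ≡ N − j (mod 4). Equivalently, ∑_{r=0}^{3} (∑_{i ≥ 0} C(j, 4i+r)) · (∑_{i ≥ 0} C(N−j, 4i+r)) = ∑_{i ≥ 0} C(N, 4i + r₀) where r₀ ∈ {0,1,2,3} is the residue of N − j modulo 4. -/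
open Finset

-- L2: count subsets of s with card satisfying p
lemma L2 {α : Type*} [DecidableEq α] (s : Finset α) (p : ℕ → Prop) [DecidablePred p] :
    ((s.powerset.filter (fun T => p T.card)).card : ℕ)
      = ∑ k ∈ (Finset.range (s.card + 1)).filter p, s.card.choose k := by
  classical
  have h := Finset.sum_powerset_apply_card (x := s) (fun m => if p m then 1 else 0)
  simp only [smul_eq_mul] at h
  calc (s.powerset.filter (fun T => p T.card)).card
      = ∑ T ∈ s.powerset, (if p T.card then 1 else 0) := by
        rw [Finset.card_filter]
    _ = ∑ m ∈ Finset.range (s.card + 1), s.card.choose m * (if p m then 1 else 0) := h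
    _ = ∑ k ∈ (Finset.range (s.card + 1)).filter p, s.card.choose k := by
        rw [Finset.sum_filter]; exact Finset.sum_congr rfl (by intro k _; split <;> simp)

-- L1: reindex sum of choose
lemma L1 (m N r : ℕ) (hm : m ≤ N) (hr : r < 4) :
    ∑ i ∈ Finset.range (N + 1), m.choose (4 * i + r)
      = ∑ k ∈ (Finset.range (m + 1)).filter (fun k => k % 4 = r), m.choose k := by
  have h1 : ∑ i ∈ Finset.range (N + 1), m.choose (4 * i + r)
      = ∑ k ∈ (Finset.range (4 * (N + 1))).filter (fun k => k % 4 = r), m.choose k := by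
    refine Finset.sum_nbij' (fun i => 4 * i + r) (fun k => k / 4) ?_ ?_ ?_ ?_ ?_
    · intro i hi
      simp only [Finset.mem_filter, Finset.mem_range] at *
      omega
    · intro k hk
      simp only [Finset.mem_filter, Finset.mem_range] at *
      omega
    · intro i hi; show (4 * i + r) / 4 = i; omega
    · intro k hk
      simp only [Finset.mem_filter, Finset.mem_range] at hk
      show 4 * (k / 4) + r = k; omega
    · intro i hi; rfl
  rw [h1]
  refine (Finset.sum_subset ?_ ?_).symm
  · intro k hk
    simp only [Finset.mem_filter, Finset.mem_range] at *
    omega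
  · intro k hk hk2
    simp only [Finset.mem_filter, Finset.mem_range] at *
    exact Nat.choose_eq_zero_of_lt (by omega)

/-- let `A ⊆ {1,…,N}` with `|A| = j`. The number of subsets `T` with
`|T ∩ Aᶜ| ≡ |T ∩ A| (mod 4)` equals the number of subsets `T` with `|T| ≡ N - j (mod 4)`;
equivalently `∑_{r=0}^{3} (∑_i C(j,4i+r)) (∑_i C(N-j,4i+r)) = ∑_i C(N,4i+r₀)` where
`r₀ = (N - j) % 4`. -/
theorem card_subsets_inter_modEq_four
    (N : ℕ) (A : Finset (Fin N)) (j : ℕ) (hj : A.card = j) :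
    ((Finset.univ : Finset (Finset (Fin N))).filter
        (fun T => (T ∩ Aᶜ).card ≡ (T ∩ A).card [MOD 4])).card
      = ((Finset.univ : Finset (Finset (Fin N))).filter
          (fun T => T.card ≡ N - j [MOD 4])).card
    ∧ ∑ r ∈ Finset.range 4,
        (∑ i ∈ Finset.range (N + 1), Nat.choose j (4 * i + r))
          * (∑ i ∈ Finset.range (N + 1), Nat.choose (N - j) (4 * i + r))
      = ∑ i ∈ Finset.range (N + 1), Nat.choose N (4 * i + (N - j) % 4) := by
  classical
  have hjN : j ≤ N := by
    have := Finset.card_le_univ A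
    simpa [hj] using this
  have hAc : Aᶜ.card = N - j := by
    rw [Finset.card_compl, hj]; simp
  -- the function f
  set f : Finset (Fin N) → Finset (Fin N) := fun T => (Tᶜ ∩ Aᶜ) ∪ (T ∩ A) with hf
  have hfinvol : ∀ T, f (f T) = T := by
    intro T
    ext x
    simp only [hf, Finset.mem_union, Finset.mem_inter, Finset.mem_compl, not_or, not_and, not_not]
    by_cases hx : x ∈ A <;> by_cases hT : x ∈ T <;> simp [hx, hT]
  have hcap1 : ∀ T, f T ∩ A = T ∩ A := by
    intro T; ext x
    simp only [hf, Finset.mem_union, Finset.mem_inter, Finset.mem_compl]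
    tauto
  have hcap2 : ∀ T, f T ∩ Aᶜ = Tᶜ ∩ Aᶜ := by
    intro T; ext x
    simp only [hf, Finset.mem_union, Finset.mem_inter, Finset.mem_compl]
    tauto
  have hcardTc : ∀ T : Finset (Fin N), (Tᶜ ∩ Aᶜ).card = (N - j) - (T ∩ Aᶜ).card := by
    intro T
    have h1 : Tᶜ ∩ Aᶜ = Aᶜ \ (T ∩ Aᶜ) := by
      ext x; simp only [Finset.mem_inter, Finset.mem_compl, Finset.mem_sdiff]; tauto
    rw [h1, Finset.card_sdiff_of_subset (Finset.inter_subset_right), hAc]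
  have hcardf : ∀ T : Finset (Fin N), (f T).card = ((N - j) - (T ∩ Aᶜ).card) + (T ∩ A).card := by
    intro T
    rw [hf]
    rw [Finset.card_union_of_disjoint, hcardTc]
    exact Finset.disjoint_left.2 (by intro x hx hy; simp at hx hy; tauto)
  have hle : ∀ T : Finset (Fin N), (T ∩ Aᶜ).card ≤ N - j := by
    intro T
    rw [← hAc]; exact Finset.card_le_card Finset.inter_subset_right
  -- Part 1
  have part1 : ((Finset.univ : Finset (Finset (Fin N))).filter
        (fun T => (T ∩ Aᶜ).card ≡ (T ∩ A).card [MOD 4])).card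
      = ((Finset.univ : Finset (Finset (Fin N))).filter
          (fun T => T.card ≡ N - j [MOD 4])).card := by
    refine Finset.card_bij' (fun T _ => f T) (fun T _ => f T) ?_ ?_ ?_ ?_
    · intro T hT
      simp only [Finset.mem_filter, Finset.mem_univ, true_and] at hT ⊢; simp only [Nat.ModEq] at hT ⊢
      rw [hcardf]
      have := hle T
      omega
    · intro T hT
      simp only [Finset.mem_filter, Finset.mem_univ, true_and] at hT ⊢; simp only [Nat.ModEq] at hT ⊢
      rw [hcap1, hcap2, hcardTc]
      have h1 := hle T
      have h2 : T.card = (T ∩ A).card + (T ∩ Aᶜ).card := by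
        rw [← Finset.card_union_of_disjoint
          (Finset.disjoint_left.2 (by intro x hx hy; simp at hx hy; tauto))]
        congr 1
        ext x; simp only [Finset.mem_union, Finset.mem_inter, Finset.mem_compl]; tauto
      omega
    · intro T _; exact hfinvol T
    · intro T _; exact hfinvol T
  refine ⟨part1, ?_⟩
  -- Part 2
  have hr0 : (N - j) % 4 < 4 := Nat.mod_lt _ (by norm_num)
  -- rewrite RHS via L1 and L2
  have hRHS : ∑ i ∈ Finset.range (N + 1), Nat.choose N (4 * i + (N - j) % 4)
      = ((Finset.univ : Finset (Finset (Fin N))).filter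
          (fun T => T.card ≡ N - j [MOD 4])).card := by
    rw [L1 N N _ le_rfl hr0]
    have := L2 (Finset.univ : Finset (Fin N)) (fun k => k % 4 = (N - j) % 4)
    simp only [Finset.powerset_univ, Finset.card_univ, Fintype.card_fin] at this
    rw [← this]
    congr 1
  -- LHS: pair decomposition
  have hLHS : ∑ r ∈ Finset.range 4,
        (∑ i ∈ Finset.range (N + 1), Nat.choose j (4 * i + r))
          * (∑ i ∈ Finset.range (N + 1), Nat.choose (N - j) (4 * i + r))
      = ((Finset.univ : Finset (Finset (Fin N))).filter
        (fun T => (T ∩ Aᶜ).card ≡ (T ∩ A).card [MOD 4])).card := by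
    have hstep : ∀ r ∈ Finset.range 4,
        (∑ i ∈ Finset.range (N + 1), Nat.choose j (4 * i + r))
          * (∑ i ∈ Finset.range (N + 1), Nat.choose (N - j) (4 * i + r))
        = ((A.powerset.filter (fun B => B.card % 4 = r)) ×ˢ
           (Aᶜ.powerset.filter (fun C => C.card % 4 = r))).card := by
      intro r hr
      rw [Finset.mem_range] at hr
      rw [Finset.card_product, L1 j N r hjN hr, L1 (N - j) N r (Nat.sub_le _ _) hr]
      rw [L2 A (fun k => k % 4 = r), L2 Aᶜ (fun k => k % 4 = r), hj, hAc]
    rw [Finset.sum_congr rfl hstep]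
    -- now show sum of product cards = big filter card
    have hbij : ((Finset.univ : Finset (Finset (Fin N))).filter
        (fun T => (T ∩ Aᶜ).card ≡ (T ∩ A).card [MOD 4])).card
      = (((A.powerset ×ˢ Aᶜ.powerset)).filter
          (fun p => p.2.card % 4 = p.1.card % 4)).card := by
      refine Finset.card_bij' (fun T _ => (T ∩ A, T ∩ Aᶜ)) (fun p _ => p.1 ∪ p.2) ?_ ?_ ?_ ?_
      · intro T hT
        simp only [Finset.mem_filter, Finset.mem_univ, true_and] at hT; simp only [Nat.ModEq] at hT
        simp only [Finset.mem_filter, Finset.mem_product, Finset.mem_powerset]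
        exact ⟨⟨Finset.inter_subset_right, Finset.inter_subset_right⟩, hT⟩
      · intro p hp
        simp only [Finset.mem_filter, Finset.mem_product, Finset.mem_powerset] at hp
        simp only [Finset.mem_filter, Finset.mem_univ, true_and]; simp only [Nat.ModEq]
        obtain ⟨⟨h1, h2⟩, h3⟩ := hp
        have e1 : (p.1 ∪ p.2) ∩ A = p.1 := by
          ext x
          simp only [Finset.mem_inter, Finset.mem_union]
          constructor
          · rintro ⟨hx | hx, hA⟩
            · exact hx
            · exact absurd hA (by simpa using h2 hx)
          · intro hx; exact ⟨Or.inl hx, h1 hx⟩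
        have e2 : (p.1 ∪ p.2) ∩ Aᶜ = p.2 := by
          ext x
          simp only [Finset.mem_inter, Finset.mem_union, Finset.mem_compl]
          constructor
          · rintro ⟨hx | hx, hA⟩
            · exact absurd (h1 hx) hA
            · exact hx
          · intro hx; exact ⟨Or.inr hx, by simpa using h2 hx⟩
        rw [e1, e2]; exact h3
      · intro T _
        ext x
        simp only [Finset.mem_union, Finset.mem_inter, Finset.mem_compl]
        tauto
      · intro p hp
        simp only [Finset.mem_filter, Finset.mem_product, Finset.mem_powerset] at hp
        obtain ⟨⟨h1, h2⟩, _⟩ := hp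
        have e1 : (p.1 ∪ p.2) ∩ A = p.1 := by
          ext x
          simp only [Finset.mem_inter, Finset.mem_union]
          constructor
          · rintro ⟨hx | hx, hA⟩
            · exact hx
            · exact absurd hA (by simpa using h2 hx)
          · intro hx; exact ⟨Or.inl hx, h1 hx⟩
        have e2 : (p.1 ∪ p.2) ∩ Aᶜ = p.2 := by
          ext x
          simp only [Finset.mem_inter, Finset.mem_union, Finset.mem_compl]
          constructor
          · rintro ⟨hx | hx, hA⟩
            · exact absurd (h1 hx) hA
            · exact hx
          · intro hx; exact ⟨Or.inr hx, by simpa using h2 hx⟩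
        show ((p.1 ∪ p.2) ∩ A, (p.1 ∪ p.2) ∩ Aᶜ) = p
        rw [e1, e2]
    rw [hbij]
    have hdecomp : (((A.powerset ×ˢ Aᶜ.powerset)).filter
          (fun p => p.2.card % 4 = p.1.card % 4))
        = (Finset.range 4).biUnion (fun r =>
            (A.powerset.filter (fun B => B.card % 4 = r)) ×ˢ
            (Aᶜ.powerset.filter (fun C => C.card % 4 = r))) := by
      ext p
      simp only [Finset.mem_filter, Finset.mem_biUnion, Finset.mem_range,
        Finset.mem_product]
      constructor
      · rintro ⟨⟨h1, h2⟩, h3⟩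
        exact ⟨p.1.card % 4, Nat.mod_lt _ (by norm_num), ⟨h1, rfl⟩, ⟨h2, h3⟩⟩
      · rintro ⟨r, _, ⟨h1, hr1⟩, ⟨h2, hr2⟩⟩
        exact ⟨⟨h1, h2⟩, by rw [hr1, hr2]⟩
    rw [hdecomp, Finset.card_biUnion]
    intro r _ s _ hrs
    refine Finset.disjoint_left.2 ?_
    rintro p hp hq
    simp only [Finset.mem_product, Finset.mem_filter] at hp hq
    exact hrs (hp.1.2 ▸ hq.1.2)
  rw [hLHS, hRHS, part1]
end
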